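/- arXiv:2605.20609 — 4 statements merged into one kernel-verified Lean document; each statement's English description precedes it below -/
import Mathlib

section
/- (Endogenous Bellman closure, finite-state version.) Let Z be a finite type and f : S → Z a map. Assume the reward factors through f, i.e., there is r₀ : Z → ℝ with 0 ≤ r₀ z ≤ 1 and r s = r₀ (f s) for all s, and assume the pushforward of the transition kernel along f depends only on the latent state and the action: for all s₁, s₂ ∈ S with f s₁ = f s₂, all a ∈ A and all z ∈ Z, ∑_{s' : f s' = z} P s₁ a s' = ∑_{s' : f s' = z} P s₂ a s'. Then the unique fixed point V* of the absorbing-goal Bellman optimality operator T factors through f: for all s₁, s₂ ∈ S, f s₁ = f s₂ implies V* s₁ = V* s₂; equivalently, there exists W : Z → ℝ with V* = W ∘ f. -/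
open Finset


private lemma abs_sup'_sub_sup'_le {ι : Type*} (t : Finset ι) (ht : t.Nonempty)
    (u v : ι → ℝ) (c : ℝ) (h : ∀ a ∈ t, |u a - v a| ≤ c) :
    |t.sup' ht u - t.sup' ht v| ≤ c := by
  rw [abs_sub_le_iff]
  constructor
  · rw [sub_le_iff_le_add]
    refine Finset.sup'_le _ _ fun a ha => ?_
    have h1 := (abs_sub_le_iff.mp (h a ha)).1
    have h2 := Finset.le_sup' v ha
    linarith
  · rw [sub_le_iff_le_add]
    refine Finset.sup'_le _ _ fun a ha => ?_
    have h1 := (abs_sub_le_iff.mp (h a ha)).2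
    have h2 := Finset.le_sup' u ha
    linarith

/-- Endogenous Bellman closure, finite-state version: if the reward factors
through a latent abstraction `f` and the pushforward of the transition kernel
along `f` depends only on the latent state and the action, then the unique
fixed point of the absorbing-goal Bellman optimality operator factors through
`f`. -/
theorem stmt4 {S A : Type*} [Fintype S] [Nonempty S] [Fintype A] [Nonempty A]
    (P : S → A → S → ℝ)
    (hP0 : ∀ s a s', 0 ≤ P s a s')
    (hP1 : ∀ s a, ∑ s', P s a s' = 1)
    (γ : ℝ) (hγ0 : 0 ≤ γ) (hγ1 : γ < 1)
    (r : S → ℝ) (hr0 : ∀ s, 0 ≤ r s) (hr1 : ∀ s, r s ≤ 1)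
    (T : (S → ℝ) → (S → ℝ))
    (hT : ∀ U s, T U s = r s + (1 - r s) * γ *
      (Finset.univ.sup' Finset.univ_nonempty fun a => ∑ s', P s a s' * U s'))
    (Z : Type*) [Fintype Z] [DecidableEq Z] (f : S → Z)
    (r₀ : Z → ℝ) (hr₀0 : ∀ z, 0 ≤ r₀ z) (hr₀1 : ∀ z, r₀ z ≤ 1)
    (hrf : ∀ s, r s = r₀ (f s))
    (hker : ∀ s₁ s₂, f s₁ = f s₂ → ∀ a z,
      ∑ s' ∈ Finset.univ.filter (fun s' => f s' = z), P s₁ a s' =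
      ∑ s' ∈ Finset.univ.filter (fun s' => f s' = z), P s₂ a s')
    (Vstar : S → ℝ) (hfix : T Vstar = Vstar)
    (huniq : ∀ U : S → ℝ, T U = U → U = Vstar) :
    (∀ s₁ s₂, f s₁ = f s₂ → Vstar s₁ = Vstar s₂) ∧
      ∃ W : Z → ℝ, Vstar = W ∘ f := by
  classical
  -- the invariant set of functions factoring through `f`
  set K : Set (S → ℝ) := {U | ∀ s₁ s₂, f s₁ = f s₂ → U s₁ = U s₂} with hK
  -- K is closed
  have hKc : IsClosed K := by
    have : K = ⋂ (s₁ : S), ⋂ (s₂ : S), ⋂ (_ : f s₁ = f s₂),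
        {U : S → ℝ | U s₁ = U s₂} := by
      ext U; simp [hK, Set.mem_iInter]
    rw [this]
    refine isClosed_iInter fun s₁ => isClosed_iInter fun s₂ =>
      isClosed_iInter fun _ => isClosed_eq (continuous_apply s₁) (continuous_apply s₂)
  -- T maps K into K
  have hmap : Set.MapsTo T K K := by
    intro U hU s₁ s₂ hf12
    rw [hT, hT, hrf s₁, hrf s₂, hf12]
    congr 1
    refine congrArg _ (Finset.sup'_congr _ rfl fun a _ => ?_)
    have h1 : ∀ s : S, ∑ s', P s a s' * U s' =
        ∑ z : Z, ∑ s' ∈ Finset.univ.filter (fun s' => f s' = z), P s a s' * U s' := by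
      intro s
      exact (Finset.sum_fiberwise univ f (fun s' => P s a s' * U s')).symm
    rw [h1 s₁, h1 s₂]
    refine Finset.sum_congr rfl fun z _ => ?_
    rcases (Finset.univ.filter (fun s' => f s' = z)).eq_empty_or_nonempty with he | ⟨s₀, hs₀⟩
    · simp [he]
    · have hfs₀ : f s₀ = z := (Finset.mem_filter.mp hs₀).2
      have h2 : ∀ s : S, ∑ s' ∈ Finset.univ.filter (fun s' => f s' = z), P s a s' * U s' =
          (∑ s' ∈ Finset.univ.filter (fun s' => f s' = z), P s a s') * U s₀ := by
        intro s
        rw [Finset.sum_mul]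
        refine Finset.sum_congr rfl fun s' hs' => ?_
        have : f s' = z := (Finset.mem_filter.mp hs').2
        rw [hU s' s₀ (this.trans hfs₀.symm)]
      rw [h2 s₁, h2 s₂, hker s₁ s₂ hf12 a z]
  -- key contraction estimate
  have hdist : ∀ U V : S → ℝ, ∀ s, dist (T U s) (T V s) ≤ γ * dist U V := by
    intro U V s
    rw [hT, hT, Real.dist_eq]
    have hsum : ∀ a, |(∑ s', P s a s' * U s') - ∑ s', P s a s' * V s'| ≤ dist U V := by
      intro a
      rw [← Finset.sum_sub_distrib]
      calc |∑ s', (P s a s' * U s' - P s a s' * V s')|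
          ≤ ∑ s', |P s a s' * U s' - P s a s' * V s'| := Finset.abs_sum_le_sum_abs _ _
        _ ≤ ∑ s', P s a s' * dist U V := by
            refine Finset.sum_le_sum fun s' _ => ?_
            rw [← mul_sub, abs_mul, abs_of_nonneg (hP0 s a s')]
            exact mul_le_mul_of_nonneg_left
              ((Real.dist_eq _ _ ▸ dist_le_pi_dist U V s')) (hP0 s a s')
        _ = dist U V := by rw [← Finset.sum_mul, hP1, one_mul]
    set MU := Finset.univ.sup' Finset.univ_nonempty fun a => ∑ s', P s a s' * U s'
    set MV := Finset.univ.sup' Finset.univ_nonempty fun a => ∑ s', P s a s' * V s'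
    have hM : |MU - MV| ≤ dist U V :=
      abs_sup'_sub_sup'_le _ _ _ _ _ fun a _ => hsum a
    have h1r : 0 ≤ 1 - r s := by linarith [hr1 s]
    calc |r s + (1 - r s) * γ * MU - (r s + (1 - r s) * γ * MV)|
        = (1 - r s) * γ * |MU - MV| := by
          rw [show r s + (1 - r s) * γ * MU - (r s + (1 - r s) * γ * MV)
              = (1 - r s) * γ * (MU - MV) by ring, abs_mul,
            abs_of_nonneg (mul_nonneg h1r hγ0)]
      _ ≤ 1 * γ * |MU - MV| := by
          refine mul_le_mul_of_nonneg_right (mul_le_mul_of_nonneg_right ?_ hγ0) (abs_nonneg _)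
          linarith [hr0 s]
      _ = γ * |MU - MV| := by ring
      _ ≤ γ * dist U V := mul_le_mul_of_nonneg_left hM hγ0
  -- Lipschitz constant as ℝ≥0
  set γ' : NNReal := ⟨γ, hγ0⟩ with hγ'
  have hlip : ∀ U V : S → ℝ, dist (T U) (T V) ≤ γ * dist U V := by
    intro U V
    refine (dist_pi_le_iff (mul_nonneg hγ0 dist_nonneg)).mpr fun s => hdist U V s
  have hcontr : ContractingWith γ' (hmap.restrict T K K) := by
    constructor
    · exact_mod_cast hγ1
    · refine LipschitzWith.of_dist_le_mul fun x y => ?_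
      have := hlip x.1 y.1
      exact this
  -- get a fixed point in K
  obtain ⟨V, hVK, hVfix, -, -⟩ := hcontr.exists_fixedPoint' hKc.isComplete hmap
    (show (0 : S → ℝ) ∈ K from fun _ _ _ => rfl) (edist_ne_top _ _)
  have hVV : Vstar ∈ K := huniq V hVfix ▸ hVK
  refine ⟨hVV, ?_⟩
  refine ⟨fun z => if h : ∃ s, f s = z then Vstar h.choose else 0, ?_⟩
  funext s
  have h : ∃ s', f s' = f s := ⟨s, rfl⟩
  simp only [Function.comp_apply, dif_pos h]
  exact hVV s h.choose h.choose_spec.symm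
end

section
/- (Sufficiency of the temporal distance difference field for optimal goal-reaching, finite version.) There exists a map π̃ : S → (S → ℝ) → A such that for every goal g ∈ S, the policy π_g defined by π_g s = π̃ s (α(s,g)) satisfies T_{π_g, g} (V(·, g)) = V(·, g); consequently, since T_{π_g, g} is a γ-contraction in the supremum norm, V(·, g) is its unique fixed point, i.e., the action chosen from (s, α(s,g)) alone recovers a policy whose value function equals the optimal value V(·, g). -/
open Finset

private lemma stmt6_uniq {S A : Type*} [Fintype S] [Nonempty S]
    (P : S → A → S → ℝ)
    (hP0 : ∀ s a s', 0 ≤ P s a s')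
    (hP1 : ∀ s a, ∑ s', P s a s' = 1)
    (γ : ℝ) (hγ0 : 0 < γ) (hγ1 : γ < 1)
    (rg : S → ℝ) (hr0 : ∀ s, 0 ≤ rg s) (hr1 : ∀ s, rg s ≤ 1)
    (W : S → ℝ) (π : S → A)
    (hfix : ∀ s, rg s + (1 - rg s) * γ * ∑ s', P s (π s) s' * W s' = W s)
    (U : S → ℝ)
    (hU : ∀ s, U s = rg s + (1 - rg s) * γ * ∑ s', P s (π s) s' * U s') :
    U = W := by
  set M : ℝ := Finset.univ.sup' Finset.univ_nonempty (fun s => |U s - W s|) with hM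
  have hM0 : 0 ≤ M :=
    le_trans (abs_nonneg _)
      (Finset.le_sup' (fun s => |U s - W s|) (Finset.mem_univ (Classical.arbitrary S)))
  have hbound : ∀ s, |U s - W s| ≤ γ * M := by
    intro s
    have hdiff : U s - W s = (1 - rg s) * γ * ∑ s', P s (π s) s' * (U s' - W s') := by
      have hsub : ∑ s', P s (π s) s' * (U s' - W s')
          = (∑ s', P s (π s) s' * U s') - ∑ s', P s (π s) s' * W s' := by
        rw [← Finset.sum_sub_distrib]
        exact Finset.sum_congr rfl (fun x _ => by ring)
      rw [hsub]
      linear_combination hU s + hfix s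
    have habs : |∑ s', P s (π s) s' * (U s' - W s')| ≤ M := by
      refine (Finset.abs_sum_le_sum_abs _ _).trans ?_
      calc ∑ s', |P s (π s) s' * (U s' - W s')|
          ≤ ∑ s', P s (π s) s' * M := by
            refine Finset.sum_le_sum (fun x _ => ?_)
            rw [abs_mul, abs_of_nonneg (hP0 s (π s) x)]
            exact mul_le_mul_of_nonneg_left
              (Finset.le_sup' (fun s => |U s - W s|) (Finset.mem_univ x)) (hP0 s (π s) x)
        _ = M := by rw [← Finset.sum_mul, hP1, one_mul]
    have hc0 : 0 ≤ (1 - rg s) * γ := mul_nonneg (by linarith [hr1 s]) (le_of_lt hγ0)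
    calc |U s - W s| = (1 - rg s) * γ * |∑ s', P s (π s) s' * (U s' - W s')| := by
          rw [hdiff, abs_mul, abs_of_nonneg hc0]
      _ ≤ (1 - rg s) * γ * M := mul_le_mul_of_nonneg_left habs hc0
      _ ≤ γ * M := by nlinarith [mul_nonneg (mul_nonneg (hr0 s) hγ0.le) hM0]
  have hMle : M ≤ γ * M := by
    rw [hM]
    exact Finset.sup'_le _ _ (fun s _ => hbound s)
  have hMzero : M ≤ 0 := by nlinarith
  funext s
  have h1 : |U s - W s| ≤ 0 :=
    le_trans (Finset.le_sup' (fun s => |U s - W s|) (Finset.mem_univ s)) hMzero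
  have h2 := abs_nonneg (U s - W s)
  have : U s - W s = 0 := abs_eq_zero.mp (le_antisymm h1 h2)
  linarith

/-- Sufficiency of the temporal distance difference field for optimal
goal-reaching, finite version: there is a map `π̃` choosing an action from a
state and the field `α(s,g) = fun x => log_γ (V x g) − log_γ (V x s)` alone,
such that for every goal `g` the induced policy's evaluation operator fixes
`V(·,g)`, and `V(·,g)` is its unique fixed point. -/
theorem stmt6 {S A : Type*} [Fintype S] [Nonempty S] [Fintype A] [Nonempty A]
    (P : S → A → S → ℝ)
    (hP0 : ∀ s a s', 0 ≤ P s a s')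
    (hP1 : ∀ s a, ∑ s', P s a s' = 1)
    (γ : ℝ) (hγ0 : 0 < γ) (hγ1 : γ < 1)
    (r : S → S → ℝ) (hr0 : ∀ g s, 0 ≤ r g s) (hr1 : ∀ g s, r g s ≤ 1)
    (V : S → S → ℝ) (hVpos : ∀ x y, 0 < V x y)
    (hVfix : ∀ g s, V s g = r g s + (1 - r g s) * γ *
      (Finset.univ.sup' Finset.univ_nonempty fun a => ∑ s', P s a s' * V s' g)) :
    ∃ πt : S → (S → ℝ) → A, ∀ g : S,
      (∀ s, r g s + (1 - r g s) * γ *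
          ∑ s', P s (πt s fun x => Real.logb γ (V x g) - Real.logb γ (V x s)) s'
            * V s' g
        = V s g) ∧
      ∀ U : S → ℝ,
        (∀ s, U s = r g s + (1 - r g s) * γ *
          ∑ s', P s (πt s fun x => Real.logb γ (V x g) - Real.logb γ (V x s)) s'
            * U s') →
        U = fun s => V s g := by
  classical
  have hγne1 : γ ≠ 1 := ne_of_lt hγ1
  refine ⟨fun s f =>
    Classical.choose (Finset.exists_mem_eq_sup' (Finset.univ_nonempty (α := A))
      (fun a => ∑ s', P s a s' * (γ ^ (f s') * V s' s))), fun g => ?_⟩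
  have hkey : ∀ s, r g s + (1 - r g s) * γ *
      ∑ s', P s (Classical.choose (Finset.exists_mem_eq_sup'
        (Finset.univ_nonempty (α := A))
        (fun a => ∑ s', P s a s' *
          (γ ^ ((fun x => Real.logb γ (V x g) - Real.logb γ (V x s)) s') * V s' s)))) s'
          * V s' g = V s g := by
    intro s
    set f : S → ℝ := fun x => Real.logb γ (V x g) - Real.logb γ (V x s) with hf
    have hspec := Classical.choose_spec (Finset.exists_mem_eq_sup'
      (Finset.univ_nonempty (α := A))
      (fun a => ∑ s', P s a s' * (γ ^ (f s') * V s' s)))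
    have hfx : ∀ x, γ ^ (f x) * V x s = V x g := by
      intro x
      have h1 : γ ^ (f x) = V x g / V x s := by
        rw [hf]
        rw [Real.rpow_sub hγ0, Real.rpow_logb hγ0 hγne1 (hVpos x g),
          Real.rpow_logb hγ0 hγne1 (hVpos x s)]
      rw [h1, div_mul_cancel₀ _ (ne_of_gt (hVpos x s))]
    have heq : (fun a => ∑ s', P s a s' * (γ ^ (f s') * V s' s))
        = fun a => ∑ s', P s a s' * V s' g := by
      funext a
      exact Finset.sum_congr rfl (fun x _ => by rw [hfx])
    have hsum : (Finset.univ.sup' Finset.univ_nonempty fun a => ∑ s', P s a s' * V s' g)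
        = ∑ s', P s (Classical.choose (Finset.exists_mem_eq_sup'
          (Finset.univ_nonempty (α := A))
          (fun a => ∑ s', P s a s' * (γ ^ (f s') * V s' s)))) s' * V s' g := by
      conv_lhs => rw [← heq]
      exact hspec.2.trans (Finset.sum_congr rfl (fun x _ => by rw [hfx]))
    rw [← hsum]
    exact (hVfix g s).symm
  refine ⟨hkey, ?_⟩
  intro U hU
  exact stmt6_uniq P hP0 hP1 γ hγ0 hγ1 (r g) (hr0 g) (hr1 g) (fun s => V s g)
    (fun s => Classical.choose (Finset.exists_mem_eq_sup'
      (Finset.univ_nonempty (α := A))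
      (fun a => ∑ s', P s a s' *
        (γ ^ ((fun x => Real.logb γ (V x g) - Real.logb γ (V x s)) s') * V s' s))))
    hkey U hU
end

section
/- (The temporal distance difference field is a task-endogenous analogy, finite version.) Assume additionally that there are a type Z, a code map e : S → S → Z, and D : Z → Z → ℝ with d x y = D (e x y) (e y x) for all x, y ∈ S. Then: (i) for any two pairs (s, g) and (s', g') with e s g = e s' g', e g s = e g' s', and satisfying, for every x ∈ S, e x s = e x g = e x s' = e x g', e s x = e s g, e g x = e g s, e s' x = e s' g', and e g' x = e g' s', the fields coincide: d x g − d x s = d x g' − d x s' for all x ∈ S (the field encodes only the task-endogenous displacement); and (ii) there exists π̃ : S → (S → ℝ) → A such that for every goal g ∈ S, the policy π_g with π_g s = π̃ s (α(s,g)) satisfies T_{π_g, g} (V(·, g)) = V(·, g), so V(·, g) is the unique fixed point of T_{π_g, g} (the field is sufficient for optimal goal-reaching). -/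
open Finset

/-- The temporal distance difference field is a task-endogenous analogy, finite
version: (i) it encodes only the task-endogenous displacement, and (ii) it is
sufficient for optimal goal-reaching. -/
theorem stmt7 {S A : Type*} [Fintype S] [Nonempty S] [Fintype A] [Nonempty A]
    (P : S → A → S → ℝ)
    (hP0 : ∀ s a s', 0 ≤ P s a s')
    (hP1 : ∀ s a, ∑ s', P s a s' = 1)
    (γ : ℝ) (hγ0 : 0 < γ) (hγ1 : γ < 1)
    (r : S → S → ℝ) (hr0 : ∀ g s, 0 ≤ r g s) (hr1 : ∀ g s, r g s ≤ 1)
    (V : S → S → ℝ) (hVpos : ∀ x y, 0 < V x y)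
    (hVfix : ∀ g s, V s g = r g s + (1 - r g s) * γ *
      (Finset.univ.sup' Finset.univ_nonempty fun a => ∑ s', P s a s' * V s' g))
    (Z : Type*) (e : S → S → Z) (D : Z → Z → ℝ)
    (hfact : ∀ x y, Real.logb γ (V x y) = D (e x y) (e y x)) :
    ((∀ s g s' g' : S,
        e s g = e s' g' → e g s = e g' s' →
        (∀ x, e x s = e x g) → (∀ x, e x s = e x s') → (∀ x, e x s = e x g') →
        (∀ x, e s x = e s g) → (∀ x, e g x = e g s) →
        (∀ x, e s' x = e s' g') → (∀ x, e g' x = e g' s') →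
        ∀ x, Real.logb γ (V x g) - Real.logb γ (V x s) =
          Real.logb γ (V x g') - Real.logb γ (V x s')) ∧
      ∃ πt : S → (S → ℝ) → A, ∀ g : S,
        (∀ s, r g s + (1 - r g s) * γ *
            ∑ s', P s (πt s fun x => Real.logb γ (V x g) - Real.logb γ (V x s)) s'
              * V s' g
          = V s g) ∧
        ∀ U : S → ℝ,
          (∀ s, U s = r g s + (1 - r g s) * γ *
            ∑ s', P s (πt s fun x => Real.logb γ (V x g) - Real.logb γ (V x s)) s'
              * U s') →
          U = fun s => V s g) := by
  classical
  have hγne : γ ≠ 1 := ne_of_lt hγ1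
  constructor
  · intro s g s' g' h1 h2 h3 h4 h5 h6 h7 h8 h9 x
    have eg : Real.logb γ (V x g) = Real.logb γ (V x g') := by
      rw [hfact, hfact, (h3 x).symm.trans (h5 x), (h7 x).trans (h2.trans (h9 x).symm)]
    have es : Real.logb γ (V x s) = Real.logb γ (V x s') := by
      rw [hfact, hfact, h4 x, (h6 x).trans (h1.trans (h8 x).symm)]
    rw [eg, es]
  · have hpow : ∀ g s x, V x s * γ ^ (Real.logb γ (V x g) - Real.logb γ (V x s)) = V x g := by
      intro g s x
      rw [Real.rpow_sub hγ0, Real.rpow_logb hγ0 hγne (hVpos x g),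
        Real.rpow_logb hγ0 hγne (hVpos x s)]
      field_simp
      exact mul_div_cancel_left₀ _ (hVpos x s).ne'
    set πt : S → (S → ℝ) → A := fun s f =>
      (Finset.exists_max_image Finset.univ
        (fun a => ∑ s', P s a s' * (V s' s * γ ^ (f s'))) Finset.univ_nonempty).choose with hπt
    refine ⟨πt, fun g => ?_⟩
    set π : S → A := fun s => πt s (fun x => Real.logb γ (V x g) - Real.logb γ (V x s)) with hπ
    have hq : ∀ s a, ∑ s', P s a s' *
        (V s' s * γ ^ ((fun x => Real.logb γ (V x g) - Real.logb γ (V x s)) s'))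
        = ∑ s', P s a s' * V s' g := by
      intro s a
      exact Finset.sum_congr rfl fun s' _ => by rw [hpow g s s']
    have hmax : ∀ s, ∑ s', P s (π s) s' * V s' g =
        Finset.univ.sup' Finset.univ_nonempty (fun a => ∑ s', P s a s' * V s' g) := by
      intro s
      have spec := (Finset.exists_max_image Finset.univ
        (fun a => ∑ s', P s a s' *
          (V s' s * γ ^ ((fun x => Real.logb γ (V x g) - Real.logb γ (V x s)) s')))
        Finset.univ_nonempty).choose_spec
      refine le_antisymm (Finset.le_sup' (fun a => ∑ s', P s a s' * V s' g) (Finset.mem_univ (π s))) (Finset.sup'_le _ _ ?_)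
      intro a _
      have h := spec.2 a (Finset.mem_univ a)
      simpa only [hq, hπ, hπt] using h
    have hfixpi : ∀ s, r g s + (1 - r g s) * γ *
        ∑ s', P s (π s) s' * V s' g = V s g := by
      intro s
      rw [hmax s, ← hVfix g s]
    refine ⟨hfixpi, ?_⟩
    intro U hU
    have hdiff : ∀ s, U s - V s g = (1 - r g s) * γ *
        ∑ s', P s (π s) s' * (U s' - V s' g) := by
      intro s
      have h1 := hU s
      have h2 := hfixpi s
      have : ∑ s', P s (π s) s' * (U s' - V s' g)
          = (∑ s', P s (π s) s' * U s') - ∑ s', P s (π s) s' * V s' g := by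
        rw [← Finset.sum_sub_distrib]
        exact Finset.sum_congr rfl fun s' _ => by ring
      rw [this]
      rw [h1] at *
      ring_nf
      linarith [h2]
    set M : ℝ := Finset.univ.sup' Finset.univ_nonempty (fun s => |U s - V s g|) with hM
    have hMle : ∀ s, |U s - V s g| ≤ M := fun s => Finset.le_sup' (fun s => |U s - V s g|) (Finset.mem_univ s)
    have hM0 : 0 ≤ M := le_trans (abs_nonneg _) (hMle (Classical.arbitrary S))
    have hbound : ∀ s, |U s - V s g| ≤ γ * M := by
      intro s
      rw [hdiff s, abs_mul]
      have h1 : |(1 - r g s) * γ| = (1 - r g s) * γ := by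
        apply abs_of_nonneg
        have h1' : 0 ≤ 1 - r g s := by linarith [hr1 g s]
        exact mul_nonneg h1' hγ0.le
      rw [h1]
      have h2 : |∑ s', P s (π s) s' * (U s' - V s' g)| ≤ M := by
        calc |∑ s', P s (π s) s' * (U s' - V s' g)|
            ≤ ∑ s', |P s (π s) s' * (U s' - V s' g)| := Finset.abs_sum_le_sum_abs _ _
          _ ≤ ∑ s', P s (π s) s' * M := by
              apply Finset.sum_le_sum
              intro s' _
              rw [abs_mul, abs_of_nonneg (hP0 s (π s) s')]
              exact mul_le_mul_of_nonneg_left (hMle s') (hP0 s (π s) s')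
          _ = M := by rw [← Finset.sum_mul, hP1 s (π s), one_mul]
      have hr' : (1 - r g s) * γ ≤ γ := by nlinarith [hr0 g s, hr1 g s]
      calc (1 - r g s) * γ * |∑ s', P s (π s) s' * (U s' - V s' g)|
          ≤ γ * |∑ s', P s (π s) s' * (U s' - V s' g)| := by
            apply mul_le_mul_of_nonneg_right hr' (abs_nonneg _)
        _ ≤ γ * M := mul_le_mul_of_nonneg_left h2 (le_of_lt hγ0)
    have hMγ : M ≤ γ * M := Finset.sup'_le _ _ fun s _ => hbound s
    have hM0' : M ≤ 0 := by nlinarith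
    funext s
    have := hMle s
    have h0 : |U s - V s g| = 0 := le_antisymm (le_trans this hM0') (abs_nonneg _)
    have := abs_eq_zero.mp h0
    linarith [this]
end

section
/- Consider the operator T : (S → ℝ) → (S → ℝ) defined by (T U) s = (if s = g then 0 else −1) + γ · max_{a ∈ A} U (step s a). Then T has a unique fixed point V, and V s = −(1 − γ^{n s})/(1 − γ) for every s ∈ S; in particular V g = 0. -/
open Finset

/-- Deterministic goal-reaching with reward `−1` per step before arrival: the
Bellman optimality operator has a unique fixed point `V`, and
`V s = −(1 − γ^(n s))/(1 − γ)` where `n s` is the shortest path length from `s`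
to the goal; in particular `V g = 0`. -/
theorem stmt8 {S A : Type*} [Fintype S] [Nonempty S] [DecidableEq S]
    [Fintype A] [Nonempty A]
    (step : S → A → S) (g : S) (habs : ∀ a, step g a = g)
    (γ : ℝ) (hγ0 : 0 ≤ γ) (hγ1 : γ < 1)
    (hreach : ∀ s, ∃ k : ℕ, ∃ l : List A, l.length = k ∧ l.foldl step s = g)
    (T : (S → ℝ) → (S → ℝ))
    (hT : ∀ U s, T U s = (if s = g then 0 else -1) +
      γ * (Finset.univ.sup' Finset.univ_nonempty fun a => U (step s a))) :
    (∃! V : S → ℝ, T V = V) ∧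
    ∀ V : S → ℝ, T V = V →
      (∀ s, V s =
        -(1 - γ ^ sInf {k : ℕ | ∃ l : List A, l.length = k ∧ l.foldl step s = g})
          / (1 - γ)) ∧
      V g = 0 := by
  classical
  have hγ1' : (0:ℝ) < 1 - γ := by linarith
  set N : S → ℕ := fun s => sInf {k : ℕ | ∃ l : List A, l.length = k ∧ l.foldl step s = g}
    with hN
  have hmem : ∀ s, ∃ l : List A, l.length = N s ∧ l.foldl step s = g := by
    intro s
    have : N s ∈ {k : ℕ | ∃ l : List A, l.length = k ∧ l.foldl step s = g} := by
      apply Nat.sInf_mem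
      obtain ⟨k, l, h1, h2⟩ := hreach s
      exact ⟨k, l, h1, h2⟩
    exact this
  have hle : ∀ s k, (∃ l : List A, l.length = k ∧ l.foldl step s = g) → N s ≤ k :=
    fun s k h => Nat.sInf_le h
  have hNg : N g = 0 := Nat.le_zero.mp (hle g 0 ⟨[], rfl, rfl⟩)
  set f : ℕ → ℝ := fun k => -(1 - γ ^ k) / (1 - γ) with hf
  have hf0 : f 0 = 0 := by simp [hf]
  have hfs : ∀ k, f (k+1) = -1 + γ * f k := by
    intro k
    simp only [hf]
    field_simp
    ring
  have hfanti : ∀ j k, j ≤ k → f k ≤ f j := by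
    intro j k hjk
    have hp : γ ^ k ≤ γ ^ j := pow_le_pow_of_le_one hγ0 hγ1.le hjk
    simp only [hf]
    apply div_le_div_of_nonneg_right ?_ hγ1'.le
    linarith
  set Vs : S → ℝ := fun s => f (N s) with hVs
  -- Vs is a fixed point
  have hfix : T Vs = Vs := by
    funext s
    rw [hT]
    by_cases hs : s = g
    · subst hs
      simp [habs, hVs, hNg, hf0]
    · -- N s ≥ 1
      have hNs1 : 1 ≤ N s := by
        rcases Nat.eq_zero_or_pos (N s) with h0 | h
        · obtain ⟨l, hl1, hl2⟩ := hmem s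
          rw [h0] at hl1
          rw [List.length_eq_zero_iff.mp hl1] at hl2
          exact absurd hl2 hs
        · exact h
      obtain ⟨m, hm⟩ : ∃ m, N s = m + 1 := ⟨N s - 1, (Nat.succ_pred_eq_of_pos hNs1).symm⟩
      have hsup : (Finset.univ.sup' Finset.univ_nonempty fun a => Vs (step s a)) = f m := by
        apply le_antisymm
        · apply Finset.sup'_le
          intro a _
          apply hfanti
          -- m ≤ N (step s a) : since N s ≤ N (step s a) + 1
          by_contra hlt
          push_neg at hlt
          obtain ⟨l, hl1, hl2⟩ := hmem (step s a)
          have : N s ≤ l.length + 1 := hle s (l.length + 1) ⟨a :: l, rfl, hl2⟩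
          omega
        · obtain ⟨l, hl1, hl2⟩ := hmem s
          cases l with
          | nil => simp at hl1; omega
          | cons a l' =>
            have hlen : l'.length = m := by simp at hl1; omega
            have h1 : N (step s a) ≤ m := hle _ m ⟨l', hlen, hl2⟩
            have h2 : f m ≤ Vs (step s a) := hfanti _ _ h1
            exact h2.trans (Finset.le_sup' (fun a => Vs (step s a)) (Finset.mem_univ a))
      rw [if_neg hs, hsup, hVs]
      simp only
      rw [hm, hfs m]
  -- uniqueness: any two fixed points agree
  have huniq : ∀ V W : S → ℝ, T V = V → T W = W → V = W := by
    intro V W hV hW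
    set M : ℝ := Finset.univ.sup' Finset.univ_nonempty (fun s => |V s - W s|) with hM
    have hM0 : 0 ≤ M := by
      obtain ⟨s⟩ := (inferInstance : Nonempty S)
      exact (abs_nonneg (V s - W s)).trans (Finset.le_sup' (fun s => |V s - W s|) (Finset.mem_univ s))
    have hbound : ∀ s, |V s - W s| ≤ γ * M := by
      intro s
      have hVs' := congrFun hV s
      have hWs' := congrFun hW s
      rw [hT] at hVs' hWs'
      have habsM : ∀ x, |V x - W x| ≤ M :=
        fun x => Finset.le_sup' (fun s => |V s - W s|) (Finset.mem_univ x)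
      have hKey : ∀ (P Q : S → ℝ), (∀ x, P x - Q x ≤ M) →
          (Finset.univ.sup' Finset.univ_nonempty fun a => P (step s a)) -
          (Finset.univ.sup' Finset.univ_nonempty fun a => Q (step s a)) ≤ M := by
        intro P Q h
        rw [sub_le_iff_le_add]
        apply Finset.sup'_le
        intro a _
        have h2 : Q (step s a) ≤ Finset.univ.sup' Finset.univ_nonempty
            (fun a => Q (step s a)) := Finset.le_sup' (fun a => Q (step s a)) (Finset.mem_univ a)
        have := h (step s a)
        linarith
      have e1 := hKey V W (fun x => (abs_sub_le_iff.mp (habsM x)).1)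
      have e2 := hKey W V (fun x => (abs_sub_le_iff.mp (habsM x)).2)
      have heq : V s - W s = γ *
          ((Finset.univ.sup' Finset.univ_nonempty fun a => V (step s a)) -
           (Finset.univ.sup' Finset.univ_nonempty fun a => W (step s a))) := by
        linear_combination hWs' - hVs'
      rw [heq, abs_mul, abs_of_nonneg hγ0]
      exact mul_le_mul_of_nonneg_left (abs_sub_le_iff.mpr ⟨e1, e2⟩) hγ0
    have : M ≤ γ * M := by
      apply Finset.sup'_le
      intro s _
      exact hbound s
    have hMz : M = 0 := by nlinarith
    funext s
    have : |V s - W s| ≤ M := Finset.le_sup' (fun s => |V s - W s|) (Finset.mem_univ s)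
    rw [hMz] at this
    have := abs_nonpos_iff.mp this
    linarith [this]
  refine ⟨⟨Vs, hfix, fun V hV => huniq V Vs hV hfix⟩, ?_⟩
  intro V hV
  have hVeq : V = Vs := huniq V Vs hV hfix
  subst hVeq
  exact ⟨fun s => rfl, by simp [hVs, hNg, hf0]⟩
end
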